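/- For real numbers y > x ≥ 1, the ratio of Gamma values satisfies x^{x-1/2} e^{y-x} / y^{y-1/2} < Γ(x)/Γ(y) < x^{x-1} e^{y-x} / y^{y-1}. -/

import Mathlib

open Real Filter Set

/-- Trapezoid rule overestimates for 1/t: strict version. -/
lemma KV_trapezoid {s : ℝ} (hs : 0 < s) :
    Real.log (s + 1) - Real.log s < 1 / (2 * s) + 1 / (2 * (s + 1)) := by
  -- via g u := (u^2+2u)/(2(u+1)) - log(1+u) > 0 for u > 0, u = 1/s
  set g : ℝ → ℝ := fun u => (u ^ 2 + 2 * u) / (2 * (u + 1)) - Real.log (1 + u) with hg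
  have hder : ∀ u : ℝ, 0 ≤ u → HasDerivAt g (u ^ 2 / (2 * (u + 1) ^ 2)) u := by
    intro u hu
    have h1 : (0:ℝ) < u + 1 := by linarith
    have h2 : (0:ℝ) < 1 + u := by linarith
    have hq : HasDerivAt (fun u : ℝ => (u ^ 2 + 2 * u) / (2 * (u + 1)))
        (((2 * u + 2) * (2 * (u + 1)) - (u ^ 2 + 2 * u) * 2) / (2 * (u + 1)) ^ 2) u := by
      have hn : HasDerivAt (fun u : ℝ => u ^ 2 + 2 * u) (2 * u + 2) u := by
        simpa using ((hasDerivAt_pow 2 u).fun_add ((hasDerivAt_id u).const_mul 2))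
      have hd : HasDerivAt (fun u : ℝ => 2 * (u + 1)) 2 u := by
        simpa using ((hasDerivAt_id u).add_const (1:ℝ)).const_mul 2
      exact hn.div hd (by positivity)
    have hl : HasDerivAt (fun u : ℝ => Real.log (1 + u)) (1 / (1 + u)) u := by
      simpa using (((hasDerivAt_id u).const_add (1:ℝ)).log h2.ne')
    have := hq.sub hl
    refine this.congr_deriv ?_
    field_simp
    ring
  have hmono : StrictMonoOn g (Ici (0:ℝ)) := by
    refine strictMonoOn_of_deriv_pos (convex_Ici 0) ?_ ?_
    · intro u hu; exact ((hder u hu).continuousAt).continuousWithinAt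
    · intro u hu
      rw [interior_Ici] at hu
      rw [(hder u (le_of_lt hu)).deriv]
      have hu' : (0:ℝ) < u := hu
      positivity
  have h0 : g 0 = 0 := by simp [hg]
  have hpos : 0 < g (1 / s) := by
    have h1s : (0:ℝ) < 1 / s := by positivity
    have := hmono (self_mem_Ici) (mem_Ici.2 h1s.le) h1s
    rwa [h0] at this
  have hrw1 : Real.log (1 + 1 / s) = Real.log (s + 1) - Real.log s := by
    rw [show (1 : ℝ) + 1 / s = (s + 1) / s by field_simp, Real.log_div (by positivity) hs.ne']
  have hrw2 : ((1 / s) ^ 2 + 2 * (1 / s)) / (2 * (1 / s + 1)) = 1 / (2 * s) + 1 / (2 * (s + 1)) := by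
    field_simp
    ring
  simp only [hg] at hpos
  rw [hrw1, hrw2] at hpos
  linarith

/-- Midpoint rule underestimates for 1/t. -/
lemma KV_midpoint {s : ℝ} (hs : 1 ≤ s) :
    1 / s ≤ Real.log (s + 1 / 2) - Real.log (s - 1 / 2) := by
  set h : ℝ → ℝ := fun v => Real.log (1 + v) - Real.log (1 - v) - 2 * v with hh
  have hder : ∀ v : ℝ, v ∈ Ico (0:ℝ) 1 → HasDerivAt h (1 / (1 + v) + 1 / (1 - v) - 2) v := by
    intro v hv
    have h1 : (0:ℝ) < 1 + v := by linarith [hv.1]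
    have h2 : (0:ℝ) < 1 - v := by linarith [hv.2]
    have ha : HasDerivAt (fun v : ℝ => Real.log (1 + v)) (1 / (1 + v)) v := by
      simpa using (((hasDerivAt_id v).const_add (1:ℝ)).log h1.ne')
    have hb : HasDerivAt (fun v : ℝ => Real.log (1 - v)) (-1 / (1 - v)) v := by
      have : HasDerivAt (fun v : ℝ => 1 - v) (-1) v := by
        simpa using (hasDerivAt_id v).const_sub (1:ℝ)
      exact this.log h2.ne'
    have hc : HasDerivAt (fun v : ℝ => 2 * v) 2 v := by simpa using (hasDerivAt_id v).const_mul 2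
    refine ((ha.sub hb).sub hc).congr_deriv ?_
    ring
  have hmono : MonotoneOn h (Ico (0:ℝ) 1) := by
    refine monotoneOn_of_deriv_nonneg (convex_Ico 0 1) ?_ ?_ ?_
    · intro v hv; exact ((hder v hv).continuousAt).continuousWithinAt
    · intro v hv
      rw [interior_Ico] at hv
      exact ((hder v ⟨le_of_lt hv.1, hv.2⟩).differentiableAt).differentiableWithinAt
    · intro v hv
      rw [interior_Ico] at hv
      rw [(hder v ⟨le_of_lt hv.1, hv.2⟩).deriv]
      have h1 : (0:ℝ) < 1 + v := by linarith [hv.1]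
      have h2 : (0:ℝ) < 1 - v := by linarith [hv.2]
      rw [div_add_div _ _ h1.ne' h2.ne']
      have : (1:ℝ) * (1 - v) + (1 + v) * 1 = 2 := by ring
      rw [this, sub_nonneg, le_div_iff₀ (by positivity : (0:ℝ) < (1+v)*(1-v))]
      nlinarith [hv.1]
  have h0 : h 0 = 0 := by simp [hh]
  have hv1 : (1 / (2 * s)) ∈ Ico (0:ℝ) 1 := by
    constructor
    · positivity
    · rw [div_lt_one (by linarith)]; linarith
  have := hmono (left_mem_Ico.2 one_pos) hv1 (by positivity)
  rw [h0] at this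
  simp only [hh] at this
  have e1 : (1:ℝ) + 1 / (2 * s) = (s + 1 / 2) / s := by field_simp
  have e2 : (1:ℝ) - 1 / (2 * s) = (s - 1 / 2) / s := by field_simp
  rw [e1, e2, Real.log_div (by positivity) (by positivity),
    Real.log_div (by nlinarith) (by positivity)] at this
  have : 2 * (1 / (2 * s)) = 1 / s := by field_simp
  linarith [hmono (left_mem_Ico.2 one_pos) hv1 (by positivity), this]
/-- Trapezoid sum estimate with an explicit extra gap term from m = 0. -/
lemma KV_sumA {t : ℝ} (ht : 0 < t) (n : ℕ) (hn : 1 ≤ n) :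
    Real.log (t + n) - Real.log t + 1 / (2 * t) + 1 / (2 * (t + n))
      + (1 / (2 * t) + 1 / (2 * (t + 1)) - (Real.log (t + 1) - Real.log t))
      ≤ ∑ m ∈ Finset.range (n + 1), 1 / (t + m) := by
  induction n, hn using Nat.le_induction with
  | base =>
    simp only [Finset.sum_range_succ, Finset.sum_range_one]
    push_cast
    have h1 : 1 / (2 * t) + 1 / (2 * t) = 1 / t := by
      field_simp
      norm_num
    have h2 : 1 / (2 * (t + 1)) + 1 / (2 * (t + 1)) = 1 / (t + 1) := by
      field_simp
      norm_num
    have h0 : t + (0:ℝ) = t := by ring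
    rw [h0]
    linarith
  | succ n hn ih =>
    rw [Finset.sum_range_succ]
    have htrap := KV_trapezoid (s := t + n) (by positivity)
    push_cast
    push_cast at ih
    have : t + (n + 1) = (t + n) + 1 := by ring
    rw [this]
    have hhalf : 1 / (t + (n:ℝ) + 1) = 1 / (2 * (t + n + 1)) + 1 / (2 * (t + n + 1)) := by
      field_simp
      norm_num
    linarith
/-- Midpoint sum estimate. -/
lemma KV_sumB {t : ℝ} (ht : 1 ≤ t) (n : ℕ) :
    ∑ m ∈ Finset.range (n + 1), 1 / (t + m) ≤ Real.log (t + n + 1 / 2) - Real.log (t - 1 / 2) := by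
  induction n with
  | zero =>
    simpa using KV_midpoint ht
  | succ n ih =>
    rw [Finset.sum_range_succ]
    have hmid := KV_midpoint (s := t + n + 1) (by push_cast; linarith [Nat.cast_nonneg (α := ℝ) n])
    push_cast
    push_cast at ih hmid
    have e2 : t + (n:ℝ) + 1 - 1 / 2 = t + n + 1 / 2 := by ring
    rw [e2] at hmid
    have e3 : t + ((n:ℝ) + 1) = t + n + 1 := by ring
    rw [e3]
    linarith
noncomputable def KV_G (n : ℕ) (t : ℝ) : ℝ :=
  t * Real.log n - ∑ m ∈ Finset.range (n + 1), Real.log (t + m)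
noncomputable def KV_U (t : ℝ) : ℝ := (t - 1 / 2) * Real.log t - t
noncomputable def KV_L (t : ℝ) : ℝ := (t - 1) * Real.log t - t
noncomputable def KV_M (t : ℝ) : ℝ := (t - 1 / 2) * Real.log (t - 1 / 2) - t
noncomputable def KV_E (t : ℝ) : ℝ :=
  (1 / 2) * Real.log t + (1 / 2) * Real.log (t + 1) + t * Real.log t - (t + 1) * Real.log (t + 1)

lemma KV_hasDerivAt_G (n : ℕ) {t : ℝ} (ht : 0 < t) :
    HasDerivAt (KV_G n) (Real.log n - ∑ m ∈ Finset.range (n + 1), 1 / (t + m)) t := by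
  have hsum : HasDerivAt (fun t : ℝ => ∑ m ∈ Finset.range (n + 1), Real.log (t + m))
      (∑ m ∈ Finset.range (n + 1), 1 / (t + m)) t := by
    refine HasDerivAt.fun_sum fun m _ => ?_
    have h1 : (0:ℝ) < t + m := by positivity
    simpa using ((hasDerivAt_id t).add_const (m:ℝ)).log h1.ne'
  exact (hasDerivAt_mul_const (Real.log n)).fun_sub hsum

lemma KV_hasDerivAt_U {t : ℝ} (ht : 0 < t) :
    HasDerivAt KV_U (Real.log t - 1 / (2 * t)) t := by
  have h := (((hasDerivAt_id t).sub_const (1/2 : ℝ)).mul (Real.hasDerivAt_log ht.ne')).sub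
    (hasDerivAt_id t)
  refine h.congr_deriv ?_
  simp only [id]
  field_simp
  ring

lemma KV_hasDerivAt_L {t : ℝ} (ht : 0 < t) :
    HasDerivAt KV_L (Real.log t - 1 / t) t := by
  have h := (((hasDerivAt_id t).sub_const (1 : ℝ)).mul (Real.hasDerivAt_log ht.ne')).sub
    (hasDerivAt_id t)
  refine h.congr_deriv ?_
  simp only [id]
  field_simp
  ring

lemma KV_hasDerivAt_M {t : ℝ} (ht : 1 / 2 < t) :
    HasDerivAt KV_M (Real.log (t - 1 / 2)) t := by
  have h1 : (0:ℝ) < t - 1 / 2 := by linarith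
  have hin : HasDerivAt (fun t : ℝ => t - 1 / 2) 1 t := (hasDerivAt_id t).sub_const _
  have h := (hin.mul (hin.log h1.ne')).sub (hasDerivAt_id t)
  refine h.congr_deriv ?_
  rw [mul_one_div, div_self h1.ne']
  ring

lemma KV_hasDerivAt_E {t : ℝ} (ht : 0 < t) :
    HasDerivAt KV_E
      (1 / (2 * t) + 1 / (2 * (t + 1)) - (Real.log (t + 1) - Real.log t)) t := by
  have h1 : (0:ℝ) < t + 1 := by linarith
  have hlt : HasDerivAt (fun t : ℝ => Real.log t) (1 / t) t := by
    simpa using Real.hasDerivAt_log ht.ne'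
  have hlt1 : HasDerivAt (fun t : ℝ => Real.log (t + 1)) (1 / (t + 1)) t := by
    simpa using ((hasDerivAt_id t).add_const (1:ℝ)).log h1.ne'
  have h := (((hlt.const_mul (1/2 : ℝ)).add (hlt1.const_mul (1/2 : ℝ))).add
    ((hasDerivAt_id t).mul hlt)).sub (((hasDerivAt_id t).add_const (1:ℝ)).mul hlt1)
  refine h.congr_deriv ?_
  simp only [id]
  field_simp
  ring

lemma KV_upper {x y : ℝ} (hx : 1 ≤ x) (hxy : x ≤ y) (n : ℕ) (hn : 1 ≤ n) :
    KV_G n y - KV_G n x ≤ (KV_U y - KV_E y) - (KV_U x - KV_E x) := by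
  set F : ℝ → ℝ := fun t => KV_U t - KV_E t - KV_G n t with hF
  have hder : ∀ t : ℝ, 1 ≤ t → HasDerivAt F
      ((Real.log t - 1 / (2 * t))
        - (1 / (2 * t) + 1 / (2 * (t + 1)) - (Real.log (t + 1) - Real.log t))
        - (Real.log n - ∑ m ∈ Finset.range (n + 1), 1 / (t + m))) t := by
    intro t ht
    have ht0 : (0:ℝ) < t := by linarith
    exact ((KV_hasDerivAt_U ht0).sub (KV_hasDerivAt_E ht0)).sub (KV_hasDerivAt_G n ht0)
  have hmono : MonotoneOn F (Set.Icc x y) := by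
    refine monotoneOn_of_deriv_nonneg (convex_Icc x y) ?_ ?_ ?_
    · intro t htm
      exact ((hder t (le_trans hx htm.1)).continuousAt).continuousWithinAt
    · intro t htm
      rw [interior_Icc] at htm
      exact ((hder t (le_trans hx htm.1.le)).differentiableAt).differentiableWithinAt
    · intro t htm
      rw [interior_Icc] at htm
      have ht1 : (1:ℝ) ≤ t := le_trans hx htm.1.le
      have ht0 : (0:ℝ) < t := by linarith
      rw [(hder t ht1).deriv]
      have hA := KV_sumA ht0 n hn
      have hlog : Real.log n ≤ Real.log (t + n) := by
        refine Real.log_le_log (by exact_mod_cast Nat.cast_pos.2 hn) (by linarith)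
      have h2 : (0:ℝ) < 2 * (t + n) := by positivity
      have : (0:ℝ) ≤ 1 / (2 * (t + n)) := by positivity
      linarith
  have h1 : x ∈ Set.Icc x y := Set.left_mem_Icc.2 hxy
  have h2 : y ∈ Set.Icc x y := Set.right_mem_Icc.2 hxy
  have := hmono h1 h2 hxy
  simp only [hF] at this
  linarith

lemma KV_lower {x y : ℝ} (hx : 1 ≤ x) (hxy : x ≤ y) (n : ℕ) (hn : 1 ≤ n) :
    (KV_M y - KV_M x) - (Real.log (y + n + 1 / 2) - Real.log n) * (y - x)
      ≤ KV_G n y - KV_G n x := by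
  set c : ℝ := Real.log (y + n + 1 / 2) - Real.log n with hc
  set F : ℝ → ℝ := fun t => KV_G n t - KV_M t + c * t with hF
  have hder : ∀ t : ℝ, 1 ≤ t → HasDerivAt F
      ((Real.log n - ∑ m ∈ Finset.range (n + 1), 1 / (t + m)) - Real.log (t - 1 / 2) + c) t := by
    intro t ht
    have ht0 : (0:ℝ) < t := by linarith
    have hct : HasDerivAt (fun t : ℝ => c * t) c t := by
      simpa using (hasDerivAt_id t).const_mul c
    exact ((KV_hasDerivAt_G n ht0).sub (KV_hasDerivAt_M (by linarith))).add hct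
  have hmono : MonotoneOn F (Set.Icc x y) := by
    refine monotoneOn_of_deriv_nonneg (convex_Icc x y) ?_ ?_ ?_
    · intro t htm
      exact ((hder t (le_trans hx htm.1)).continuousAt).continuousWithinAt
    · intro t htm
      rw [interior_Icc] at htm
      exact ((hder t (le_trans hx htm.1.le)).differentiableAt).differentiableWithinAt
    · intro t htm
      rw [interior_Icc] at htm
      have ht1 : (1:ℝ) ≤ t := le_trans hx htm.1.le
      rw [(hder t ht1).deriv]
      have hB := KV_sumB ht1 n
      have hlog : Real.log (t + n + 1 / 2) ≤ Real.log (y + n + 1 / 2) := by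
        refine Real.log_le_log (by positivity) (by linarith [htm.2])
      simp only [hc]
      linarith
  have h1 : x ∈ Set.Icc x y := Set.left_mem_Icc.2 hxy
  have h2 : y ∈ Set.Icc x y := Set.right_mem_Icc.2 hxy
  have := hmono h1 h2 hxy
  simp only [hF] at this
  linarith

lemma KV_E_lt {x y : ℝ} (hx : 1 ≤ x) (hxy : x < y) : KV_E x < KV_E y := by
  have hmono : StrictMonoOn KV_E (Set.Icc x y) := by
    refine strictMonoOn_of_deriv_pos (convex_Icc x y) ?_ ?_
    · intro t htm
      have ht0 : (0:ℝ) < t := by linarith [htm.1]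
      exact (KV_hasDerivAt_E ht0).continuousAt.continuousWithinAt
    · intro t htm
      rw [interior_Icc] at htm
      have ht0 : (0:ℝ) < t := by linarith [htm.1]
      rw [(KV_hasDerivAt_E ht0).deriv]
      have := KV_trapezoid ht0
      linarith
  exact hmono (Set.left_mem_Icc.2 hxy.le) (Set.right_mem_Icc.2 hxy.le) hxy

lemma KV_ML_lt {x y : ℝ} (hx : 1 ≤ x) (hxy : x < y) :
    KV_L y - KV_L x < KV_M y - KV_M x := by
  set R : ℝ → ℝ := fun t => KV_M t - KV_L t with hR
  have hmono : StrictMonoOn R (Set.Icc x y) := by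
    refine strictMonoOn_of_deriv_pos (convex_Icc x y) ?_ ?_
    · intro t htm
      have ht0 : (0:ℝ) < t := by linarith [htm.1]
      exact ((KV_hasDerivAt_M (by linarith [htm.1])).sub (KV_hasDerivAt_L ht0)).continuousAt.continuousWithinAt
    · intro t htm
      rw [interior_Icc] at htm
      have ht1 : (1:ℝ) < t := lt_of_le_of_lt hx htm.1
      have ht0 : (0:ℝ) < t := by linarith
      have hth : (0:ℝ) < t - 1 / 2 := by linarith
      rw [((KV_hasDerivAt_M (by linarith)).fun_sub (KV_hasDerivAt_L ht0)).deriv]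
      -- need : 0 < log (t - 1/2) - (log t - 1/t)
      have hkey : Real.log t - Real.log (t - 1 / 2) < 1 / t := by
        have h1 : Real.log (t / (t - 1 / 2)) < t / (t - 1 / 2) - 1 := by
          refine Real.log_lt_sub_one_of_pos (by positivity) ?_
          intro hcon
          rw [div_eq_one_iff_eq hth.ne'] at hcon
          linarith
        rw [Real.log_div ht0.ne' hth.ne'] at h1
        have h2 : t / (t - 1 / 2) - 1 ≤ 1 / t := by
          rw [div_sub_one hth.ne', div_le_div_iff₀ hth ht0]
          nlinarith
        linarith
      linarith
  have := hmono (Set.left_mem_Icc.2 hxy.le) (Set.right_mem_Icc.2 hxy.le) hxy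
  simp only [hR] at this
  linarith
lemma KV_c_tendsto {y : ℝ} (hy : 0 < y) :
    Filter.Tendsto (fun n : ℕ => Real.log (y + n + 1 / 2) - Real.log n)
      Filter.atTop (nhds 0) := by
  have h1 : Filter.Tendsto (fun n : ℕ => (y + 1 / 2) * (1 / (n:ℝ)) + 1)
      Filter.atTop (nhds 1) := by
    have := (tendsto_one_div_atTop_nhds_zero_nat).const_mul (y + 1 / 2)
    have h2 := this.add (tendsto_const_nhds (x := (1:ℝ)))
    simpa using h2
  have h2 := (Real.continuousAt_log one_ne_zero).tendsto.comp h1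
  rw [Real.log_one] at h2
  refine h2.congr' ?_
  filter_upwards [Filter.eventually_ge_atTop 1] with n hn
  have hn0 : (0:ℝ) < n := by exact_mod_cast hn
  have he : (y + 1 / 2) * (1 / (n:ℝ)) + 1 = (y + n + 1 / 2) / n := by
    field_simp
    ring
  simp only [Function.comp_apply, he]
  rw [Real.log_div (by positivity) hn0.ne']

theorem stmt_14 (x y : ℝ) (hx : 1 ≤ x) (hxy : x < y) :
    x ^ (x - 1 / 2) * Real.exp (y - x) / y ^ (y - 1 / 2)
        < Real.Gamma x / Real.Gamma y ∧
    Real.Gamma x / Real.Gamma y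
        < x ^ (x - 1) * Real.exp (y - x) / y ^ (y - 1) := by
  have hx0 : (0:ℝ) < x := by linarith
  have hy0 : (0:ℝ) < y := by linarith
  have hGx : 0 < Real.Gamma x := Real.Gamma_pos_of_pos hx0
  have hGy : 0 < Real.Gamma y := Real.Gamma_pos_of_pos hy0
  -- the limit of G n y - G n x
  have hDlim : Filter.Tendsto (fun n => KV_G n y - KV_G n x) Filter.atTop
      (nhds (Real.log (Real.Gamma y) - Real.log (Real.Gamma x))) := by
    have h := (Real.BohrMollerup.tendsto_log_gamma hy0).sub
      (Real.BohrMollerup.tendsto_log_gamma hx0)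
    refine h.congr fun n => ?_
    simp only [Real.BohrMollerup.logGammaSeq, KV_G]
    ring
  set D : ℝ := Real.log (Real.Gamma y) - Real.log (Real.Gamma x) with hD
  -- upper estimate for D
  have hUp : D ≤ (KV_U y - KV_E y) - (KV_U x - KV_E x) := by
    refine le_of_tendsto hDlim ?_
    filter_upwards [Filter.eventually_ge_atTop 1] with n hn
    exact KV_upper hx hxy.le n hn
  have hUp' : D < KV_U y - KV_U x := by
    have := KV_E_lt hx hxy
    linarith
  -- lower estimate for D
  have hLow : KV_M y - KV_M x ≤ D := by
    have hlim2 : Filter.Tendsto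
        (fun n : ℕ => (KV_M y - KV_M x) - (Real.log (y + n + 1 / 2) - Real.log n) * (y - x))
        Filter.atTop (nhds (KV_M y - KV_M x)) := by
      have := ((KV_c_tendsto hy0).mul_const (y - x)).const_sub (KV_M y - KV_M x)
      simpa using this
    refine le_of_tendsto_of_tendsto hlim2 hDlim ?_
    filter_upwards [Filter.eventually_ge_atTop 1] with n hn
    exact KV_lower hx hxy.le n hn
  have hLow' : KV_L y - KV_L x < D := lt_of_lt_of_le (KV_ML_lt hx hxy) hLow
  -- convert to the stated form
  have hratio : Real.Gamma x / Real.Gamma y = Real.exp (-D) := by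
    rw [hD, neg_sub, Real.exp_sub, Real.exp_log hGx, Real.exp_log hGy]
  constructor
  · have hLHS : x ^ (x - 1 / 2) * Real.exp (y - x) / y ^ (y - 1 / 2)
        = Real.exp (KV_U x - KV_U y) := by
      rw [Real.rpow_def_of_pos hx0, Real.rpow_def_of_pos hy0, ← Real.exp_add, ← Real.exp_sub]
      congr 1
      simp only [KV_U]
      ring
    rw [hLHS, hratio, Real.exp_lt_exp]
    simp only [KV_U] at hUp' ⊢
    linarith
  · have hRHS : x ^ (x - 1) * Real.exp (y - x) / y ^ (y - 1)
        = Real.exp (KV_L x - KV_L y) := by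
      rw [Real.rpow_def_of_pos hx0, Real.rpow_def_of_pos hy0, ← Real.exp_add, ← Real.exp_sub]
      congr 1
      simp only [KV_L]
      ring
    rw [hRHS, hratio, Real.exp_lt_exp]
    linarith
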